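/- For a ∈ (0,1/2] and r ∈ (0,1), the generalized Grötzsch modulus satisfies the Ramanujan derivative formula: dμ_a(r)/dr = −(1/(r(1−r²)))·(1/F(a,1−a;1;r²)²). -/

import Mathlib

noncomputable def GaussF (a b c x : ℝ) : ℝ :=
  ∑' n : ℕ, ((ascPochhammer ℝ n).eval a * (ascPochhammer ℝ n).eval b /
    ((ascPochhammer ℝ n).eval c * n.factorial)) * x ^ n

noncomputable def muA (a r : ℝ) : ℝ :=
  (Real.pi / (2 * Real.sin (Real.pi * a))) *
    GaussF a (1-a) 1 (1 - r^2) / GaussF a (1-a) 1 (r^2)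

open Filter Topology Real

noncomputable def dd (a : ℝ) (n : ℕ) : ℝ :=
  (ascPochhammer ℝ n).eval a * (ascPochhammer ℝ n).eval (1-a) /
    ((n.factorial : ℝ) * n.factorial)

lemma dd_zero (a : ℝ) : dd a 0 = 1 := by simp [dd]

lemma dd_succ (a : ℝ) (n : ℕ) :
    dd a (n+1) = dd a n * (((n:ℝ)+a) * ((n:ℝ)+1-a) / ((n:ℝ)+1)^2) := by
  have h1 := ascPochhammer_succ_eval (S := ℝ) n a
  have h2 := ascPochhammer_succ_eval (S := ℝ) n (1-a)
  have hf : ((n+1).factorial : ℝ) = ((n:ℝ)+1) * n.factorial := by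
    push_cast [Nat.factorial_succ]; ring
  have hfn : (n.factorial : ℝ) ≠ 0 := by positivity
  have hn1 : ((n:ℝ)+1) ≠ 0 := by positivity
  rw [dd, dd, h1, h2, hf]
  field_simp
  ring

lemma dd_pos {a : ℝ} (ha : 0 < a) (ha1 : a < 1) (n : ℕ) : 0 < dd a n := by
  have h1 : 0 < (ascPochhammer ℝ n).eval a := ascPochhammer_pos n a ha
  have h2 : 0 < (ascPochhammer ℝ n).eval (1-a) := ascPochhammer_pos n _ (by linarith)
  have : (0:ℝ) < n.factorial := by positivity
  unfold dd; positivity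

lemma ratio_le_one {a : ℝ} (ha : 0 < a) (ha1 : a < 1) (n : ℕ) :
    ((n:ℝ)+a) * ((n:ℝ)+1-a) / ((n:ℝ)+1)^2 ≤ 1 := by
  rw [div_le_one (by positivity)]
  nlinarith [Nat.cast_nonneg (α := ℝ) n]

lemma dd_le_one {a : ℝ} (ha : 0 < a) (ha1 : a < 1) (n : ℕ) : dd a n ≤ 1 := by
  induction n with
  | zero => simp [dd_zero]
  | succ n ih =>
    rw [dd_succ]
    calc dd a n * (((n:ℝ)+a) * ((n:ℝ)+1-a) / ((n:ℝ)+1)^2)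
        ≤ 1 * 1 := by
          have h1 : (0:ℝ) ≤ ((n:ℝ)+a) * ((n:ℝ)+1-a) / ((n:ℝ)+1)^2 := by
            have : (0:ℝ) ≤ (n:ℝ)+1-a := by
              have := Nat.cast_nonneg (α := ℝ) n; linarith
            positivity
          exact mul_le_mul ih (ratio_le_one ha ha1 n) h1 zero_le_one
      _ = 1 := by ring

lemma poch_prod (a : ℝ) (n : ℕ) :
    (ascPochhammer ℝ n).eval a = ∏ j ∈ Finset.range n, (a + j) := by
  induction n with
  | zero => simp
  | succ n ih => rw [ascPochhammer_succ_eval, ih, Finset.prod_range_succ]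

lemma sin_pi_pos {a : ℝ} (ha : 0 < a) (ha1 : a < 1) : 0 < Real.sin (Real.pi * a) := by
  apply Real.sin_pos_of_pos_of_lt_pi (by positivity)
  nlinarith [Real.pi_pos]

lemma tendsto_dd_aux {a : ℝ} (ha : 0 < a) (ha1 : a < 1) :
    Tendsto (fun n : ℕ => dd a n * (((n:ℝ)+a) * ((n:ℝ)+1-a) / n)) atTop
      (𝓝 (Real.sin (Real.pi * a) / Real.pi)) := by
  have hGa : 0 < Real.Gamma a := Real.Gamma_pos_of_pos ha
  have hGb : 0 < Real.Gamma (1-a) := Real.Gamma_pos_of_pos (by linarith)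
  have hlim : Tendsto (fun n : ℕ => 1 / (Real.GammaSeq a n * Real.GammaSeq (1-a) n))
      atTop (𝓝 (1 / (Real.Gamma a * Real.Gamma (1-a)))) := by
    apply Tendsto.div tendsto_const_nhds
      ((Real.GammaSeq_tendsto_Gamma a).mul (Real.GammaSeq_tendsto_Gamma (1-a)))
    positivity
  have hval : 1 / (Real.Gamma a * Real.Gamma (1-a)) = Real.sin (Real.pi * a) / Real.pi := by
    rw [Real.Gamma_mul_Gamma_one_sub]
    rw [one_div_div]
  rw [hval] at hlim
  apply hlim.congr'
  filter_upwards [eventually_ge_atTop 1] with n hn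
  have hn0 : (0:ℝ) < n := by exact_mod_cast hn
  have hP1 : 0 < (ascPochhammer ℝ (n+1)).eval a := ascPochhammer_pos _ _ ha
  have hP2 : 0 < (ascPochhammer ℝ (n+1)).eval (1-a) := ascPochhammer_pos _ _ (by linarith)
  have hfn : (0:ℝ) < n.factorial := by positivity
  have hGS : Real.GammaSeq a n * Real.GammaSeq (1-a) n =
      ((n:ℝ) * (n.factorial * n.factorial)) /
        ((ascPochhammer ℝ (n+1)).eval a * (ascPochhammer ℝ (n+1)).eval (1-a)) := by
    rw [Real.GammaSeq, Real.GammaSeq, ← poch_prod, ← poch_prod]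
    rw [div_mul_div_comm]
    congr 1
    rw [show (n:ℝ)^a * (n.factorial:ℝ) * ((n:ℝ)^(1-a) * n.factorial)
        = ((n:ℝ)^a * (n:ℝ)^(1-a)) * (n.factorial * n.factorial) by ring,
      ← Real.rpow_add hn0]
    norm_num
  rw [hGS, one_div_div]
  rw [ascPochhammer_succ_eval, ascPochhammer_succ_eval, dd]
  push_cast
  field_simp
  ring

lemma tendsto_e {a : ℝ} (ha : 0 < a) (ha1 : a < 1) :
    Tendsto (fun n : ℕ => ((n:ℝ)+1) * dd a (n+1)) atTop
      (𝓝 (Real.sin (Real.pi * a) / Real.pi)) := by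
  have h1 := tendsto_dd_aux ha ha1
  have h2 : Tendsto (fun n : ℕ => (n:ℝ) / ((n:ℝ)+1)) atTop (𝓝 1) := by
    have := tendsto_natCast_div_add_atTop (𝕜 := ℝ) 1
    exact this
  have h3 := h1.mul h2
  rw [mul_one] at h3
  apply h3.congr'
  filter_upwards [eventually_ge_atTop 1] with n hn
  have hn0 : (0:ℝ) < n := by exact_mod_cast hn
  rw [dd_succ]
  field_simp

lemma e_mono {a : ℝ} (ha : 0 < a) (ha1 : a < 1) :
    Monotone (fun n : ℕ => ((n:ℝ)+1) * dd a (n+1)) := by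
  apply monotone_nat_of_le_succ
  intro n
  have hd := dd_pos ha ha1 (n+1)
  have key : dd a (n+2) = dd a (n+1) * (((n:ℝ)+1+a) * ((n:ℝ)+1+1-a) / ((n:ℝ)+1+1)^2) := by
    have := dd_succ a (n+1); push_cast at this; convert this using 3
  simp only [key]
  have hn : (0:ℝ) ≤ n := Nat.cast_nonneg n
  push_cast
  rw [show ((n:ℝ)+1+1) * (dd a (n+1) * (((n:ℝ)+1+a) * ((n:ℝ)+1+1-a) / ((n:ℝ)+1+1)^2))
      = dd a (n+1) * ((((n:ℝ)+1+a) * ((n:ℝ)+1+1-a)) / ((n:ℝ)+1+1)) by field_simp]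
  have h2 : ((n:ℝ)+1) ≤ (((n:ℝ)+1+a) * ((n:ℝ)+1+1-a)) / ((n:ℝ)+1+1) := by
    rw [le_div_iff₀ (by positivity)]
    nlinarith
  nlinarith

lemma e_le_one {a : ℝ} (ha : 0 < a) (ha1 : a < 1) (n : ℕ) :
    ((n:ℝ)+1) * dd a (n+1) ≤ 1 := by
  have h := (e_mono ha ha1).ge_of_tendsto (tendsto_e ha ha1) n
  have : Real.sin (Real.pi * a) / Real.pi ≤ 1 := by
    have h1 : Real.sin (Real.pi * a) ≤ 1 := Real.sin_le_one _
    have := Real.pi_gt_three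
    rw [div_le_one (by linarith)]; linarith
  linarith

lemma tendsto_dd_zero {a : ℝ} (ha : 0 < a) (ha1 : a < 1) :
    Tendsto (fun n : ℕ => dd a n) atTop (𝓝 0) := by
  apply squeeze_zero' (Eventually.of_forall fun n => (dd_pos ha ha1 n).le)
    ?_ tendsto_one_div_atTop_nhds_zero_nat
  filter_upwards [eventually_ge_atTop 1] with n hn
  obtain ⟨m, rfl⟩ := Nat.exists_eq_add_of_le hn
  have := e_le_one ha ha1 m
  have hm : (0:ℝ) < (m:ℝ)+1 := by positivity
  rw [show 1 + m = m + 1 by ring]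
  rw [div_eq_inv_mul, mul_one]
  push_cast
  rw [inv_eq_one_div, le_div_iff₀ hm]
  linarith

lemma summable_sq_geom {r : ℝ} (hr : |r| < 1) :
    Summable (fun n : ℕ => ((n:ℝ)+1)^2 * r^n) := by
  have hr' : ‖r‖ < 1 := by rwa [Real.norm_eq_abs]
  have h2 := summable_pow_mul_geometric_of_norm_lt_one (R := ℝ) 2 hr'
  have h1 := summable_pow_mul_geometric_of_norm_lt_one (R := ℝ) 1 hr'
  have h0 := summable_geometric_of_norm_lt_one hr'
  have := (h2.add ((h1.mul_left 2).add h0))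
  apply this.congr
  intro n
  push_cast
  ring

lemma summable_pow_of_le {c : ℕ → ℝ} (hc : ∀ n, |c n| ≤ ((n:ℝ)+1)^2) {x : ℝ}
    (hx : |x| < 1) : Summable (fun n => c n * x^n) := by
  apply Summable.of_norm_bounded
    (summable_sq_geom (by rwa [abs_abs]))
  intro n
  rw [Real.norm_eq_abs, abs_mul, abs_pow]
  apply mul_le_mul_of_nonneg_right (hc n) (by positivity)

lemma hasDerivAt_tsum_pow (c : ℕ → ℝ) (hc : ∀ n, |c n| ≤ ((n:ℝ)+1)) {x : ℝ} (hx : |x| < 1) :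
    HasDerivAt (fun y => ∑' n : ℕ, c n * y^n) (∑' n : ℕ, ((n:ℝ)+1) * c (n+1) * x^n) x := by
  set ρ : ℝ := (1+|x|)/2 with hρdef
  have hxρ : |x| < ρ := by rw [hρdef]; linarith [abs_nonneg x]
  have hρ1 : ρ < 1 := by rw [hρdef]; linarith
  have hρ0 : 0 < ρ := by rw [hρdef]; linarith [abs_nonneg x]
  set u : ℕ → ℝ := fun n => ((n:ℝ)+1)^2 * ρ^n / ρ with hudef
  have hu : Summable u := (summable_sq_geom (by rwa [abs_of_pos hρ0])).div_const ρ
  have hbound : ∀ n : ℕ, ∀ y : ℝ, y ∈ Set.Ioo (-ρ) ρ →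
      ‖c n * ((n:ℝ) * y^(n-1))‖ ≤ u n := by
    intro n y hy
    have hyρ : |y| ≤ ρ := by
      rw [abs_le]; exact ⟨hy.1.le, hy.2.le⟩
    match n with
    | 0 => simp [hudef]; positivity
    | (m+1) =>
      rw [Real.norm_eq_abs, abs_mul, abs_mul]
      have h1 : |c (m+1)| ≤ (m:ℝ)+2 := by have := hc (m+1); push_cast at this; linarith
      have h2 : |y| ^ m ≤ ρ ^ m := pow_le_pow_left₀ (abs_nonneg y) hyρ m
      have h3 : |((m+1:ℕ):ℝ)| = (m:ℝ)+1 := by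
        rw [abs_of_nonneg (by positivity)]; push_cast; ring
      have : u (m+1) = ((m:ℝ)+2)^2 * ρ^m := by
        rw [hudef]; push_cast; field_simp; ring
      rw [this]
      simp only [Nat.add_sub_cancel, abs_pow, h3]
      calc |c (m+1)| * (((m:ℝ)+1) * |y|^m) ≤ ((m:ℝ)+2) * (((m:ℝ)+2) * ρ^m) := by
            apply mul_le_mul h1 _ (by positivity) (by positivity)
            apply mul_le_mul (by linarith) h2 (by positivity) (by positivity)
        _ = ((m:ℝ)+2)^2 * ρ^m := by ring
  have hg0 : Summable fun n => c n * (0:ℝ)^n := by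
    apply summable_of_ne_finset_zero (s := {0})
    intro n hn
    simp only [Finset.mem_singleton] at hn
    rw [zero_pow hn, mul_zero]
  have hder : HasDerivAt (fun y => ∑' n : ℕ, c n * y^n)
      (∑' n : ℕ, c n * ((n:ℝ) * x^(n-1))) x := hasDerivAt_tsum_of_isPreconnected hu isOpen_Ioo
    (convex_Ioo _ _).isPreconnected
    (fun n y _ => (hasDerivAt_pow n y).const_mul (c n)) hbound
    (Set.mem_Ioo.2 ⟨by linarith, hρ0⟩) hg0
    (Set.mem_Ioo.2 ⟨(abs_lt.1 hxρ).1, (abs_lt.1 hxρ).2⟩)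
  convert hder using 1
  have hs : Summable (fun n => c n * ((n:ℝ) * x^(n-1))) :=
    Summable.of_norm_bounded hu (fun n => hbound n x
      (Set.mem_Ioo.2 ⟨(abs_lt.1 hxρ).1, (abs_lt.1 hxρ).2⟩))
  rw [hs.tsum_eq_zero_add]
  simp only [Nat.cast_zero, zero_mul, mul_zero, zero_add]
  apply tsum_congr
  intro n
  simp only [Nat.add_sub_cancel]
  push_cast
  ring

noncomputable def FF (a x : ℝ) : ℝ := ∑' n : ℕ, dd a n * x^n
noncomputable def FF1 (a x : ℝ) : ℝ := ∑' n : ℕ, ((n:ℝ)+1) * dd a (n+1) * x^n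
noncomputable def FF2 (a x : ℝ) : ℝ := ∑' n : ℕ, ((n:ℝ)+2) * ((n:ℝ)+1) * dd a (n+2) * x^n

section bounds
variable {a : ℝ} (ha : 0 < a) (ha1 : a < 1)
include ha ha1

lemma ndd_le (n : ℕ) : 0 ≤ (n:ℝ) * dd a n ∧ (n:ℝ) * dd a n ≤ 1 := by
  match n with
  | 0 => norm_num
  | (m+1) =>
    have h1 := e_le_one ha ha1 m
    have h2 := (dd_pos ha ha1 (m+1)).le
    constructor
    · positivity
    · push_cast; linarith [h1]

lemma bE (n : ℕ) : |dd a n| ≤ ((n:ℝ)+1)^2 := by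
  rw [abs_of_pos (dd_pos ha ha1 n)]
  have := dd_le_one ha ha1 n
  nlinarith [Nat.cast_nonneg (α := ℝ) n]

lemma bC (n : ℕ) : |((n:ℝ)+1) * dd a (n+1)| ≤ ((n:ℝ)+1)^2 := by
  rw [abs_of_nonneg (mul_nonneg (by positivity) (dd_pos ha ha1 (n+1)).le)]
  have := e_le_one ha ha1 n
  nlinarith [Nat.cast_nonneg (α := ℝ) n]

lemma bD (n : ℕ) : |(n:ℝ) * dd a n| ≤ ((n:ℝ)+1)^2 := by
  obtain ⟨h0, h1⟩ := ndd_le ha ha1 n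
  rw [abs_of_nonneg h0]
  nlinarith [Nat.cast_nonneg (α := ℝ) n]

lemma bA (n : ℕ) : |((n:ℝ)+1) * (n:ℝ) * dd a (n+1)| ≤ ((n:ℝ)+1)^2 := by
  have h1 := e_le_one ha ha1 n
  have h2 := (dd_pos ha ha1 (n+1)).le
  have hn : (0:ℝ) ≤ n := Nat.cast_nonneg n
  rw [abs_of_nonneg (by positivity)]
  nlinarith

lemma bB (n : ℕ) : |(n:ℝ) * ((n:ℝ)-1) * dd a n| ≤ ((n:ℝ)+1)^2 := by
  match n with
  | 0 => norm_num
  | (m+1) =>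
    have h1 := e_le_one ha ha1 m
    have h2 := (dd_pos ha ha1 (m+1)).le
    have hm : (0:ℝ) ≤ m := Nat.cast_nonneg m
    push_cast
    rw [abs_of_nonneg (by nlinarith [mul_nonneg (mul_nonneg (by linarith : (0:ℝ) ≤ (m:ℝ)+1) hm) h2])]
    nlinarith

lemma bF2 (n : ℕ) : |((n:ℝ)+2) * ((n:ℝ)+1) * dd a (n+2)| ≤ ((n:ℝ)+1)^2 := by
  have h1 := e_le_one ha ha1 (n+1)
  have h2 := (dd_pos ha ha1 (n+2)).le
  have hn : (0:ℝ) ≤ n := Nat.cast_nonneg n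
  push_cast at h1
  rw [abs_of_nonneg (by positivity)]
  nlinarith

end bounds

section deriv
variable {a : ℝ} (ha : 0 < a) (ha1 : a < 1)
include ha ha1

lemma hasDerivAt_FF {x : ℝ} (hx : |x| < 1) : HasDerivAt (FF a) (FF1 a x) x := by
  have hc : ∀ n : ℕ, |dd a n| ≤ ((n:ℝ)+1) := by
    intro n
    rw [abs_of_pos (dd_pos ha ha1 n)]
    have := dd_le_one ha ha1 n
    have : (0:ℝ) ≤ n := Nat.cast_nonneg n
    linarith [dd_le_one ha ha1 n]
  exact hasDerivAt_tsum_pow (dd a) hc hx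

lemma hasDerivAt_FF1 {x : ℝ} (hx : |x| < 1) : HasDerivAt (fun y => FF1 a y) (FF2 a x) x := by
  have hc : ∀ n : ℕ, |((n:ℝ)+1) * dd a (n+1)| ≤ ((n:ℝ)+1) := by
    intro n
    rw [abs_of_nonneg (mul_nonneg (by positivity) (dd_pos ha ha1 (n+1)).le)]
    have := e_le_one ha ha1 n
    have h0 : (0:ℝ) ≤ n := Nat.cast_nonneg n
    linarith
  have := hasDerivAt_tsum_pow (fun n => ((n:ℝ)+1) * dd a (n+1)) hc hx
  convert this using 1
  · rfl
  apply tsum_congr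
  intro n
  push_cast
  ring

lemma hxF2 {x : ℝ} (hx : |x| < 1) :
    x * FF2 a x = ∑' n : ℕ, ((n:ℝ)+1) * (n:ℝ) * dd a (n+1) * x^n := by
  have hA : Summable (fun n : ℕ => ((n:ℝ)+1) * (n:ℝ) * dd a (n+1) * x^n) :=
    summable_pow_of_le (bA ha ha1) hx
  rw [hA.tsum_eq_zero_add]
  simp only [Nat.cast_zero, mul_zero, zero_mul, pow_zero, zero_add, mul_one]
  rw [FF2, ← tsum_mul_left]
  apply tsum_congr
  intro n
  push_cast
  ring

lemma hxF1 {x : ℝ} (hx : |x| < 1) :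
    x * FF1 a x = ∑' n : ℕ, (n:ℝ) * dd a n * x^n := by
  have hD : Summable (fun n : ℕ => (n:ℝ) * dd a n * x^n) :=
    summable_pow_of_le (bD ha ha1) hx
  rw [hD.tsum_eq_zero_add]
  simp only [Nat.cast_zero, zero_mul, zero_add]
  rw [FF1, ← tsum_mul_left]
  apply tsum_congr
  intro n
  push_cast
  ring

lemma hx2F2 {x : ℝ} (hx : |x| < 1) :
    x * (x * FF2 a x) = ∑' n : ℕ, (n:ℝ) * ((n:ℝ)-1) * dd a n * x^n := by
  have hB : Summable (fun n : ℕ => (n:ℝ) * ((n:ℝ)-1) * dd a n * x^n) :=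
    summable_pow_of_le (bB ha ha1) hx
  rw [hB.tsum_eq_zero_add]
  simp only [Nat.cast_zero, zero_mul, zero_add]
  rw [hxF2 ha ha1 hx, ← tsum_mul_left]
  apply tsum_congr
  intro n
  push_cast
  ring

lemma ode {x : ℝ} (hx : |x| < 1) :
    x * (1-x) * FF2 a x + (1-2*x) * FF1 a x - a * (1-a) * FF a x = 0 := by
  have hA : Summable (fun n : ℕ => ((n:ℝ)+1) * (n:ℝ) * dd a (n+1) * x^n) :=
    summable_pow_of_le (bA ha ha1) hx
  have hB : Summable (fun n : ℕ => (n:ℝ) * ((n:ℝ)-1) * dd a n * x^n) :=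
    summable_pow_of_le (bB ha ha1) hx
  have hC : Summable (fun n : ℕ => ((n:ℝ)+1) * dd a (n+1) * x^n) :=
    summable_pow_of_le (bC ha ha1) hx
  have hD : Summable (fun n : ℕ => (n:ℝ) * dd a n * x^n) :=
    summable_pow_of_le (bD ha ha1) hx
  have hE : Summable (fun n : ℕ => dd a n * x^n) :=
    summable_pow_of_le (bE ha ha1) hx
  have expand : x * (1-x) * FF2 a x + (1-2*x) * FF1 a x - a * (1-a) * FF a x
      = (x * FF2 a x - x * (x * FF2 a x)) + (FF1 a x - 2 * (x * FF1 a x))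
        - a * (1-a) * FF a x := by ring
  rw [expand, hx2F2 ha ha1 hx, hxF2 ha ha1 hx, hxF1 ha ha1 hx]
  rw [show (2:ℝ) * ∑' n : ℕ, (n:ℝ) * dd a n * x^n
      = ∑' n : ℕ, 2 * ((n:ℝ) * dd a n * x^n) from (tsum_mul_left).symm]
  rw [show a * (1-a) * FF a x = ∑' n : ℕ, a * (1-a) * (dd a n * x^n) by
    rw [FF, tsum_mul_left]]
  rw [FF1]
  rw [← hA.tsum_sub hB, ← hC.tsum_sub (hD.mul_left 2),
    ← (hA.sub hB).tsum_add (hC.sub (hD.mul_left 2)),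
    ← Summable.tsum_sub ((hA.sub hB).add (hC.sub (hD.mul_left 2))) ((hE.mul_left (a * (1-a))))]
  rw [show (0:ℝ) = ∑' _ : ℕ, (0:ℝ) from tsum_zero.symm]
  apply tsum_congr
  intro n
  have h' : ((n:ℝ)+1)^2 * dd a (n+1) = dd a n * (((n:ℝ)+a) * ((n:ℝ)+1-a)) := by
    rw [dd_succ]
    field_simp
  have : ((n:ℝ)+1) * (n:ℝ) * dd a (n+1) * x^n - (n:ℝ) * ((n:ℝ)-1) * dd a n * x^n +
      (((n:ℝ)+1) * dd a (n+1) * x^n - 2 * ((n:ℝ) * dd a n * x^n)) -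
      a * (1-a) * (dd a n * x^n) = 0 := by linear_combination x^n * h'
  convert this using 2

end deriv

lemma abel_cesaro {c : ℕ → ℝ} {L : ℝ} (hc : Tendsto c atTop (𝓝 L)) :
    Tendsto (fun t : ℝ => (1-t) * ∑' n : ℕ, c n * t^n) (𝓝[<] (1:ℝ)) (𝓝 L) := by
  have habs : Tendsto (fun n => |c n - L|) atTop (𝓝 0) := by
    have := (hc.sub_const L).abs
    simpa using this
  obtain ⟨M, hM⟩ := habs.bddAbove_range
  simp only [upperBounds, Set.mem_range, forall_exists_index, Set.mem_setOf_eq] at hM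
  have hM' : ∀ n, |c n - L| ≤ M := fun n => hM n rfl
  have hM0 : 0 ≤ M := le_trans (abs_nonneg _) (hM' 0)
  rw [Metric.tendsto_nhdsWithin_nhds]
  intro ε hε
  obtain ⟨N, hN⟩ := (Metric.tendsto_atTop.1 hc (ε/2) (by linarith))
  set C := ∑ i ∈ Finset.range N, |c i - L| with hCdef
  have hC0 : 0 ≤ C := Finset.sum_nonneg fun i _ => abs_nonneg _
  refine ⟨min (1/2) (ε/(2*(C+1))), by positivity, ?_⟩
  intro t ht hdist
  rw [Real.dist_eq] at hdist
  have hδ1 : |t - 1| < 1/2 := lt_of_lt_of_le hdist (min_le_left _ _)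
  have hδ2 : |t - 1| < ε/(2*(C+1)) := lt_of_lt_of_le hdist (min_le_right _ _)
  have ht1 : t < 1 := ht
  have ht0 : 0 < t := by
    rw [abs_lt] at hδ1; linarith
  have h1t : 0 < 1 - t := by linarith
  have h1t' : 1 - t < ε/(2*(C+1)) := by
    rw [abs_lt] at hδ2; linarith
  have htabs : |t| < 1 := by rw [abs_lt]; constructor <;> linarith
  -- summabilities
  have hgeo : Summable (fun n : ℕ => t^n) := summable_geometric_of_lt_one ht0.le ht1
  have hs1 : Summable (fun n : ℕ => (c n - L) * t^n) := by
    apply Summable.of_norm_bounded (hgeo.mul_left M)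
    intro n
    rw [Real.norm_eq_abs, abs_mul, abs_pow, abs_of_pos ht0]
    exact mul_le_mul_of_nonneg_right (hM' n) (by positivity)
  have hs2 : Summable (fun n : ℕ => |c n - L| * t^n) := by
    apply Summable.of_norm_bounded (hgeo.mul_left M)
    intro n
    rw [Real.norm_eq_abs, abs_mul, abs_pow, abs_abs, abs_of_pos ht0]
    exact mul_le_mul_of_nonneg_right (hM' n) (by positivity)
  have hs0 : Summable (fun n : ℕ => c n * t^n) := by
    have := hs1.add (hgeo.mul_left L)
    apply this.congr
    intro n; ring
  -- key algebra
  have hgeosum : ∑' n : ℕ, t^n = (1-t)⁻¹ := tsum_geometric_of_lt_one ht0.le ht1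
  have key : (1-t) * ∑' n : ℕ, c n * t^n - L = (1-t) * ∑' n : ℕ, (c n - L) * t^n := by
    have : (∑' n : ℕ, c n * t^n) = (∑' n : ℕ, (c n - L) * t^n) + L * (1-t)⁻¹ := by
      rw [← hgeosum, ← tsum_mul_left]
      rw [← hs1.tsum_add (hgeo.mul_left L)]
      apply tsum_congr; intro n; ring
    rw [this]
    field_simp
    ring
  rw [Real.dist_eq, key, abs_mul, abs_of_pos h1t]
  have hbound : |∑' n : ℕ, (c n - L) * t^n| ≤ C + (ε/2) * (1-t)⁻¹ := by
    have heq : ∀ n : ℕ, ‖(c n - L) * t^n‖ = |c n - L| * t^n := by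
      intro n; rw [Real.norm_eq_abs, abs_mul, abs_pow, abs_of_pos ht0]
    have habs1 : |∑' n : ℕ, (c n - L) * t^n| ≤ ∑' n : ℕ, |c n - L| * t^n := by
      rw [← Real.norm_eq_abs]
      refine le_trans (norm_tsum_le_tsum_norm ?_) (le_of_eq (tsum_congr heq))
      exact hs2.congr (fun n => (heq n).symm)
    refine le_trans habs1 ?_
    rw [← Summable.sum_add_tsum_nat_add N hs2]
    have hpart1 : ∑ i ∈ Finset.range N, |c i - L| * t^i ≤ C := by
      apply Finset.sum_le_sum
      intro i _
      nth_rewrite 2 [← mul_one (|c i - L|)]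
      exact mul_le_mul_of_nonneg_left (pow_le_one₀ ht0.le ht1.le) (abs_nonneg _)
    have hpart2 : (∑' i : ℕ, |c (i+N) - L| * t^(i+N)) ≤ (ε/2) * (1-t)⁻¹ := by
      have : ∀ i : ℕ, |c (i+N) - L| * t^(i+N) ≤ (ε/2) * t^i := by
        intro i
        have h1 : |c (i+N) - L| ≤ ε/2 := by
          have := hN (i+N) (by omega)
          rw [Real.dist_eq] at this
          linarith
        have h2 : t^(i+N) ≤ t^i := by
          apply pow_le_pow_of_le_one ht0.le ht1.le
          omega
        exact mul_le_mul h1 h2 (by positivity) (by linarith)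
      calc (∑' i : ℕ, |c (i+N) - L| * t^(i+N)) ≤ ∑' i : ℕ, (ε/2) * t^i := by
            apply Summable.tsum_le_tsum this (hs2.comp_injective (add_left_injective N)) (hgeo.mul_left _)
        _ = (ε/2) * (1-t)⁻¹ := by rw [tsum_mul_left, hgeosum]
    linarith
  calc (1-t) * |∑' n : ℕ, (c n - L) * t^n| ≤ (1-t) * (C + (ε/2) * (1-t)⁻¹) :=
        mul_le_mul_of_nonneg_left hbound h1t.le
    _ = (1-t) * C + ε/2 := by field_simp
    _ < ε := by
        have : (1-t) * C ≤ (ε/(2*(C+1))) * C := mul_le_mul_of_nonneg_right h1t'.le hC0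
        have h3 : (ε/(2*(C+1))) * C < ε/2 := by
          rw [div_mul_eq_mul_div, div_lt_div_iff₀ (by positivity) (by norm_num)]
          nlinarith
        linarith

noncomputable def WW (a x : ℝ) : ℝ :=
  x * (1-x) * (FF a x * FF1 a (1-x) + FF1 a x * FF a (1-x))

section wronskian
variable {a : ℝ} (ha : 0 < a) (ha1 : a < 1)
include ha ha1

lemma hasDerivAt_WW {x : ℝ} (hx : x ∈ Set.Ioo (0:ℝ) 1) : HasDerivAt (WW a) 0 x := by
  obtain ⟨hx0, hx1⟩ := hx
  have h1 : |x| < 1 := by rw [abs_of_pos hx0]; exact hx1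
  have h2 : |1-x| < 1 := by rw [abs_of_pos (by linarith)]; linarith
  have inner : HasDerivAt (fun y : ℝ => 1 - y) (-1) x := by
    simpa using (hasDerivAt_id x).const_sub 1
  have hF : HasDerivAt (FF a) (FF1 a x) x := hasDerivAt_FF ha ha1 h1
  have hF1 : HasDerivAt (fun y => FF1 a y) (FF2 a x) x := hasDerivAt_FF1 ha ha1 h1
  have hG : HasDerivAt (fun y => FF a (1-y)) (FF1 a (1-x) * (-1)) x :=
    (hasDerivAt_FF ha ha1 h2).comp x inner
  have hG1 : HasDerivAt (fun y => FF1 a (1-y)) (FF2 a (1-x) * (-1)) x :=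
    (hasDerivAt_FF1 ha ha1 h2).comp x inner
  have hpoly : HasDerivAt (fun y : ℝ => y * (1-y)) (1 * (1-x) + x * (-1)) x :=
    (hasDerivAt_id x).mul inner
  have hin : HasDerivAt (fun y => FF a y * FF1 a (1-y) + FF1 a y * FF a (1-y))
      ((FF1 a x * FF1 a (1-x) + FF a x * (FF2 a (1-x) * (-1))) +
        (FF2 a x * FF a (1-x) + FF1 a x * (FF1 a (1-x) * (-1)))) x :=
    (hF.mul hG1).add (hF1.mul hG)
  have htot := hpoly.mul hin
  have heq : WW a = fun y => (y * (1-y)) * (FF a y * FF1 a (1-y) + FF1 a y * FF a (1-y)) := by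
    funext y; rw [WW]
  rw [heq]
  refine htot.congr_deriv ?_
  symm
  have o1 := ode ha ha1 h1
  have o2 := ode ha ha1 h2
  have e1 : (1:ℝ) - (1-x) = x := by ring
  rw [e1] at o2
  linear_combination (-(FF a (1-x))) * o1 + (FF a x) * o2

lemma WW_const {x y : ℝ} (hx : x ∈ Set.Ioo (0:ℝ) 1) (hy : y ∈ Set.Ioo (0:ℝ) 1) :
    WW a y = WW a x := by
  have main : ∀ u v : ℝ, u ∈ Set.Ioo (0:ℝ) 1 → v ∈ Set.Ioo (0:ℝ) 1 → u ≤ v →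
      WW a v = WW a u := by
    intro u v hu hv huv
    have hsub : Set.Icc u v ⊆ Set.Ioo (0:ℝ) 1 := fun z hz =>
      ⟨lt_of_lt_of_le hu.1 hz.1, lt_of_le_of_lt hz.2 hv.2⟩
    have hcont : ContinuousOn (WW a) (Set.Icc u v) := fun z hz =>
      ((hasDerivAt_WW ha ha1 (hsub hz)).continuousAt).continuousWithinAt
    have hderiv : ∀ z ∈ Set.Ico u v, HasDerivWithinAt (WW a) 0 (Set.Ici z) z := fun z hz =>
      (hasDerivAt_WW ha ha1 (hsub ⟨hz.1, hz.2.le⟩)).hasDerivWithinAt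
    exact constant_of_has_deriv_right_zero hcont hderiv v ⟨huv, le_refl v⟩
  rcases le_total x y with h | h
  · exact main x y hx hy h
  · exact (main y x hy hx h).symm

lemma WW_tendsto :
    Tendsto (WW a) (𝓝[>] (0:ℝ)) (𝓝 (Real.sin (Real.pi * a) / Real.pi)) := by
  have hcomp : Tendsto (fun x : ℝ => 1 - x) (𝓝[>] (0:ℝ)) (𝓝[<] (1:ℝ)) := by
    apply tendsto_nhdsWithin_of_tendsto_nhds_of_eventually_within
    · have h : Tendsto (fun x : ℝ => 1 - x) (𝓝 0) (𝓝 1) := by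
        have h0 : Continuous (fun x : ℝ => 1 - x) := by continuity
        simpa using h0.tendsto (0:ℝ)
      exact h.mono_left nhdsWithin_le_nhds
    · filter_upwards [self_mem_nhdsWithin] with x hx
      simp only [Set.mem_Iio]
      simp only [Set.mem_Ioi] at hx
      linarith
  have T1 : Tendsto (fun x : ℝ => (1-(1-x)) * FF1 a (1-x)) (𝓝[>] (0:ℝ))
      (𝓝 (Real.sin (Real.pi * a) / Real.pi)) :=
    (abel_cesaro (tendsto_e ha ha1)).comp hcomp
  have T2 : Tendsto (fun x : ℝ => (1-(1-x)) * FF a (1-x)) (𝓝[>] (0:ℝ)) (𝓝 0) :=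
    (abel_cesaro (tendsto_dd_zero ha ha1)).comp hcomp
  have hFF0 : FF a 0 = 1 := by
    rw [FF, tsum_eq_single 0 (fun n hn => by rw [zero_pow hn, mul_zero])]
    simp [dd_zero]
  have T3 : Tendsto (fun x : ℝ => FF a x) (𝓝[>] (0:ℝ)) (𝓝 1) := by
    rw [← hFF0]
    exact ((hasDerivAt_FF ha ha1 (by norm_num : |(0:ℝ)| < 1)).continuousAt.tendsto).mono_left
      nhdsWithin_le_nhds
  have T4 : Tendsto (fun x : ℝ => FF1 a x) (𝓝[>] (0:ℝ)) (𝓝 (FF1 a 0)) :=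
    ((hasDerivAt_FF1 ha ha1 (by norm_num : |(0:ℝ)| < 1)).continuousAt.tendsto).mono_left
      nhdsWithin_le_nhds
  have h1mx : Tendsto (fun x : ℝ => 1 - x) (𝓝[>] (0:ℝ)) (𝓝 1) := by
    have h : Tendsto (fun x : ℝ => 1 - x) (𝓝 0) (𝓝 1) := by
      have h0 : Continuous (fun x : ℝ => 1 - x) := by continuity
      simpa using h0.tendsto (0:ℝ)
    exact h.mono_left nhdsWithin_le_nhds
  have comb := ((h1mx.mul T1).mul T3).add ((h1mx.mul T4).mul T2)
  have hval : (1 * (Real.sin (Real.pi * a) / Real.pi)) * 1 + (1 * FF1 a 0) * 0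
      = Real.sin (Real.pi * a) / Real.pi := by ring
  rw [hval] at comb
  apply comb.congr
  intro x
  rw [WW]
  ring

lemma WW_eq {x : ℝ} (hx : x ∈ Set.Ioo (0:ℝ) 1) :
    WW a x = Real.sin (Real.pi * a) / Real.pi := by
  have hmem : Set.Ioo (0:ℝ) 1 ∈ 𝓝[>] (0:ℝ) :=
    Ioo_mem_nhdsGT_of_mem ⟨le_refl 0, zero_lt_one⟩
  have hev : (fun y => WW a y) =ᶠ[𝓝[>] (0:ℝ)] (fun _ => WW a x) := by
    filter_upwards [hmem] with y hy
    exact WW_const ha ha1 hx hy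
  have htend : Tendsto (fun _ : ℝ => WW a x) (𝓝[>] (0:ℝ))
      (𝓝 (Real.sin (Real.pi * a) / Real.pi)) := (WW_tendsto ha ha1).congr' hev
  exact tendsto_nhds_unique tendsto_const_nhds htend

end wronskian

lemma GaussF_eq (a x : ℝ) : GaussF a (1-a) 1 x = FF a x := by
  rw [GaussF, FF]
  apply tsum_congr
  intro n
  rw [ascPochhammer_eval_one]
  rfl

lemma FF_pos {a : ℝ} (ha : 0 < a) (ha1 : a < 1) {x : ℝ} (hx0 : 0 ≤ x) (hx1 : x < 1) :
    0 < FF a x := by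
  have habs : |x| < 1 := by rw [abs_of_nonneg hx0]; exact hx1
  have hsum : Summable (fun n : ℕ => dd a n * x^n) := summable_pow_of_le (bE ha ha1) habs
  have h0 : (1:ℝ) ≤ FF a x := by
    have := hsum.le_tsum 0 (fun i _ => mul_nonneg (dd_pos ha ha1 i).le (pow_nonneg hx0 i))
    simp [dd_zero] at this
    exact this
  linarith

theorem ramanujan_derivative_formula (a : ℝ) (ha : a ∈ Set.Ioc (0:ℝ) (1/2))
    (r : ℝ) (hr : r ∈ Set.Ioo (0:ℝ) 1) :
    HasDerivAt (muA a)
      (-(1 / (r * (1 - r^2))) * (1 / (GaussF a (1-a) 1 (r^2))^2)) r := by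
  obtain ⟨ha0, ha2⟩ := ha
  have ha1 : a < 1 := by linarith
  obtain ⟨hr0, hr1⟩ := hr
  have hx0 : (0:ℝ) < r^2 := by positivity
  have hx1 : r^2 < 1 := by nlinarith
  have habs1 : |r^2| < 1 := by rw [abs_of_pos hx0]; exact hx1
  have habs2 : |1-r^2| < 1 := by rw [abs_of_pos (by linarith)]; linarith
  have hsin : 0 < Real.sin (Real.pi * a) := sin_pi_pos ha0 ha1
  have hpi : (0:ℝ) < Real.pi := Real.pi_pos
  set K := Real.pi / (2 * Real.sin (Real.pi * a)) with hKdef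
  have hmu : muA a = fun s => K * FF a (1-s^2) / FF a (s^2) := by
    funext s
    rw [muA, GaussF_eq, GaussF_eq]
  have hd1 : HasDerivAt (fun s : ℝ => 1 - s^2) (-(2*r)) r := by
    have := (hasDerivAt_pow 2 r).const_sub 1
    simpa using this
  have hd2 : HasDerivAt (fun s : ℝ => s^2) (2*r) r := by
    have h := hasDerivAt_pow 2 r
    norm_num at h
    exact h
  have hFo : HasDerivAt (fun s : ℝ => FF a (1-s^2)) (FF1 a (1-r^2) * (-(2*r))) r :=
    by
      have h2 : HasDerivAt (FF a ∘ fun s : ℝ => 1 - s^2) (FF1 a (1-r^2) * (-(2*r))) r :=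
        HasDerivAt.comp r (hasDerivAt_FF ha0 ha1 habs2) hd1
      exact h2
  have hFi : HasDerivAt (fun s : ℝ => FF a (s^2)) (FF1 a (r^2) * (2*r)) r := by
    have h2 : HasDerivAt (FF a ∘ (fun s : ℝ => s^2)) (FF1 a (r^2) * (2*r)) r :=
      HasDerivAt.comp r (hasDerivAt_FF ha0 ha1 habs1) hd2
    exact h2
  have hu : FF a (r^2) ≠ 0 := (FF_pos ha0 ha1 hx0.le hx1).ne'
  have hder := ((hFo.const_mul K).div hFi hu)
  rw [GaussF_eq, hmu]
  refine hder.congr_deriv ?_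
  symm
  have hW := WW_eq ha0 ha1 (Set.mem_Ioo.2 ⟨hx0, hx1⟩)
  rw [WW] at hW
  have hr2 : (1:ℝ) - r^2 ≠ 0 := by linarith
  rw [hKdef]
  have hW2 : Real.pi * (r ^ 2 * (1 - r ^ 2) *
      (FF a (r ^ 2) * FF1 a (1 - r ^ 2) + FF1 a (r ^ 2) * FF a (1 - r ^ 2)))
      = Real.sin (Real.pi * a) := by
    rw [hW]; field_simp
  field_simp
  linear_combination hW2
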